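/- arXiv:1801.02952 — 2 statements merged into one kernel-verified Lean document; each statement's English description precedes it below -/
import Mathlib

section
/- Let H be a densely defined, self-adjoint, nonnegative operator on a Hilbert space with spectral measure E, let λ > ε > 0 with dist(λ, σ(H)) > ε, and let g be a bounded positive continuous function on [0,∞). Set c₂ = min( inf_{t∈[λ,λ+1]} g(t), inf_{t∈[λ+1,∞)} g(t)(t−λ) ) and c₃ = λ · sup_{t∈[0,λ]} g(t), and assume ε ≤ 1. Let P = E([0,λ−ε]). Then for every unit vector ψ in the domain of H, Re (g(H)ψ, (H−λ)ψ) ≥ c₂ ε ‖(I−P)ψ‖² − c₃ ‖Pψ‖². -/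
open MeasureTheory

/-- Lower bound for `Re (g(H)ψ, (H-λ)ψ)` in the reverse direction of the generalized
Weyl criterion, in the multiplication-operator model of a densely defined self-adjoint
nonnegative operator `H` on a complex Hilbert space: `H` is multiplication by a
nonnegative measurable `h` on `L²(μ)`, `g(H)` is multiplication by `g ∘ h`, the spectral
projection `P = E([0, λ-ε])` is multiplication by the indicator of `{h ≤ λ-ε}`, and the
hypothesis `dist(λ, σ(H)) > ε` says that `|h - λ| > ε` almost everywhere.  With
`c₂ = min(inf_{[λ,λ+1]} g, inf_{[λ+1,∞)} g(t)(t-λ))` and `c₃ = λ sup_{[0,λ]} g`, for a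
unit vector `ψ` in the domain of `H`:
`Re (g(H)ψ, (H-λ)ψ) ≥ c₂ ε ‖(I-P)ψ‖² - c₃ ‖Pψ‖²`. -/
theorem stmt14
    {X : Type*} [MeasurableSpace X] (μ : Measure X)
    (h : X → ℝ) (hmeas : Measurable h) (hpos : ∀ x, 0 ≤ h x)
    (l ε : ℝ) (hε0 : 0 < ε) (hεl : ε < l) (hε1 : ε ≤ 1)
    (hgap : ∀ᵐ x ∂μ, ε < |h x - l|)
    (g : ℝ → ℝ) (hg_cont : ContinuousOn g (Set.Ici 0))
    (hg_pos : ∀ t, 0 ≤ t → 0 < g t) (hg_bdd : BddAbove (g '' Set.Ici 0))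
    (a b s c₂ c₃ : ℝ)
    (ha : IsGLB (g '' Set.Icc l (l + 1)) a)
    (hb : IsGLB ((fun t => g t * (t - l)) '' Set.Ici (l + 1)) b)
    (hbpos : 0 < b)
    (hc₂ : c₂ = min a b)
    (hs : IsLUB (g '' Set.Icc 0 l) s)
    (hc₃ : c₃ = l * s)
    (ψ : X → ℂ) (hψ : MemLp ψ 2 μ)
    (hdom : MemLp (fun x => (h x : ℂ) * ψ x) 2 μ)
    (hunit : ∫ x, ‖ψ x‖ ^ 2 ∂μ = 1) :
    c₂ * ε * (∫ x in {x | l - ε < h x}, ‖ψ x‖ ^ 2 ∂μ)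
        - c₃ * (∫ x in {x | h x ≤ l - ε}, ‖ψ x‖ ^ 2 ∂μ)
      ≤ ∫ x, g (h x) * (h x - l) * ‖ψ x‖ ^ 2 ∂μ := by
  -- notation
  set n : X → ℝ := fun x => ‖ψ x‖ ^ 2 with hn
  set f : X → ℝ := fun x => g (h x) * (h x - l) * n x with hf
  have hA : MeasurableSet {x | h x ≤ l - ε} := measurableSet_le hmeas measurable_const
  have hAc : {x | h x ≤ l - ε}ᶜ = {x | l - ε < h x} := by
    ext x; simp [not_le]
  -- measurability of g ∘ h
  have hGmeas : Measurable fun x => g (h x) := by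
    have h1 : Measurable fun x => (⟨h x, hpos x⟩ : Set.Ici (0:ℝ)) :=
      hmeas.subtype_mk
    have h2 : Measurable ((Set.Ici (0:ℝ)).restrict g) :=
      (ContinuousOn.restrict hg_cont).measurable
    exact h2.comp h1
  -- bound on g
  obtain ⟨M, hM⟩ := hg_bdd
  have hMb : ∀ x, |g (h x)| ≤ M := fun x => by
    rw [abs_of_pos (hg_pos _ (hpos x))]
    exact hM ⟨h x, hpos x, rfl⟩
  -- integrability of n
  have hn_int : Integrable n μ :=
    (memLp_two_iff_integrable_sq_norm hψ.1).mp hψ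
  have hn_nonneg : ∀ x, 0 ≤ n x := fun x => sq_nonneg _
  -- integrability of h * n
  have hhn_int : Integrable (fun x => h x * n x) μ := by
    have hb_int : Integrable (fun x => (‖ψ x‖ ^ 2 + ‖(h x : ℂ) * ψ x‖ ^ 2) / 2) μ :=
      (hn_int.add ((memLp_two_iff_integrable_sq_norm hdom.1).mp hdom)).div_const 2
    refine Integrable.mono' hb_int ?_ ?_
    · exact (hmeas.aemeasurable.mul ((hψ.1.norm.aemeasurable.pow_const 2))).aestronglyMeasurable
    · filter_upwards with x
      have hx0 := hpos x
      have hne : ‖(h x : ℂ) * ψ x‖ = h x * ‖ψ x‖ := by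
        rw [norm_mul, Complex.norm_real, Real.norm_eq_abs, abs_of_nonneg hx0]
      rw [Real.norm_eq_abs, abs_of_nonneg (mul_nonneg hx0 (hn_nonneg x))]
      simp only [hn]
      rw [hne]
      nlinarith [sq_nonneg (h x * ‖ψ x‖ - ‖ψ x‖)]
  -- integrability of f
  have hq_int : Integrable (fun x => (h x - l) * n x) μ := by
    have := hhn_int.sub (hn_int.const_mul l)
    refine this.congr ?_
    filter_upwards with x
    simp only [Pi.sub_apply, hn]
    ring
  have hf_int : Integrable f μ := by
    have H : Integrable (fun x => g (h x) * ((h x - l) * n x)) μ := by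
      refine Integrable.bdd_mul hq_int hGmeas.aestronglyMeasurable (c := M) (Filter.Eventually.of_forall fun x => ?_)
      simpa [Real.norm_eq_abs] using hMb x
    exact H.congr (by filter_upwards with x; simp only [hf]; ring)
  -- properties of a, b, s, c₂
  have ha0 : 0 ≤ a := ha.2 fun y ⟨t, ht, hty⟩ => hty ▸
    le_of_lt (hg_pos t (le_trans (le_of_lt (lt_trans hε0 hεl)) ht.1))
  have hc₂a : c₂ ≤ a := hc₂ ▸ min_le_left a b
  have hc₂b : c₂ ≤ b := hc₂ ▸ min_le_right a b
  -- pointwise bound on the set {h ≤ l - ε}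
  have hlowA : ∀ x ∈ {x | h x ≤ l - ε}, -c₃ * n x ≤ f x := by
    intro x hx
    have hx1 : h x ≤ l - ε := hx
    have hx0 := hpos x
    have hgs : g (h x) ≤ s := hs.1 ⟨h x, ⟨hx0, le_trans hx1 (by linarith)⟩, rfl⟩
    have hgp : 0 < g (h x) := hg_pos _ hx0
    have hnn := hn_nonneg x
    have key : g (h x) * (l - h x) ≤ s * l :=
      mul_le_mul hgs (by linarith) (by linarith) (le_trans hgp.le hgs)
    simp only [hf, hc₃]
    nlinarith [mul_le_mul_of_nonneg_right key hnn]
  -- a.e. pointwise bound on the complement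
  have hlowB : ∀ᵐ x ∂μ.restrict {x | h x ≤ l - ε}ᶜ, c₂ * ε * n x ≤ f x := by
    have h1 : ∀ᵐ x ∂μ.restrict {x | h x ≤ l - ε}ᶜ, ε < |h x - l| :=
      ae_restrict_of_ae hgap
    have h2 : ∀ᵐ x ∂μ.restrict {x | h x ≤ l - ε}ᶜ, x ∈ {x | h x ≤ l - ε}ᶜ :=
      ae_restrict_mem hA.compl
    filter_upwards [h1, h2] with x hx1 hx2
    have hx3 : l - ε < h x := by simpa [not_le] using hx2
    have hx4 : l + ε < h x := by
      rcases lt_or_ge (h x) l with hc | hc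
      · exfalso
        rw [abs_of_neg (by linarith : h x - l < 0)] at hx1
        linarith
      · rw [abs_of_nonneg (by linarith : (0:ℝ) ≤ h x - l)] at hx1
        linarith
    have hnn := hn_nonneg x
    simp only [hf]
    rcases le_or_gt (h x) (l + 1) with hc | hc
    · have hga : a ≤ g (h x) := ha.1 ⟨h x, ⟨by linarith, hc⟩, rfl⟩
      have key : c₂ * ε ≤ g (h x) * (h x - l) := by
        calc c₂ * ε ≤ a * ε := mul_le_mul_of_nonneg_right hc₂a (le_of_lt hε0)
          _ ≤ g (h x) * (h x - l) := by nlinarith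
      exact mul_le_mul_of_nonneg_right key hnn
    · have hgb : b ≤ g (h x) * (h x - l) := hb.1 ⟨h x, le_of_lt hc, rfl⟩
      have key : c₂ * ε ≤ g (h x) * (h x - l) := by
        calc c₂ * ε ≤ b * ε := mul_le_mul_of_nonneg_right hc₂b (le_of_lt hε0)
          _ ≤ b := by nlinarith
          _ ≤ g (h x) * (h x - l) := hgb
      exact mul_le_mul_of_nonneg_right key hnn
  -- split the integral
  have hsplit : (∫ x in {x | h x ≤ l - ε}, f x ∂μ)
      + ∫ x in {x | h x ≤ l - ε}ᶜ, f x ∂μ = ∫ x, f x ∂μ :=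
    integral_add_compl hA hf_int
  have hIA : -c₃ * ∫ x in {x | h x ≤ l - ε}, n x ∂μ
      ≤ ∫ x in {x | h x ≤ l - ε}, f x ∂μ := by
    rw [← integral_const_mul]
    exact setIntegral_mono_on ((hn_int.const_mul (-c₃)).integrableOn)
      (hf_int.integrableOn) hA hlowA
  have hIB : c₂ * ε * ∫ x in {x | h x ≤ l - ε}ᶜ, n x ∂μ
      ≤ ∫ x in {x | h x ≤ l - ε}ᶜ, f x ∂μ := by
    rw [← integral_const_mul]
    exact integral_mono_ae ((hn_int.const_mul (c₂ * ε)).integrableOn)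
      (hf_int.integrableOn) hlowB
  rw [hAc] at hIB
  rw [hAc] at hsplit
  have : c₂ * ε * (∫ x in {x | l - ε < h x}, n x ∂μ)
      - c₃ * (∫ x in {x | h x ≤ l - ε}, n x ∂μ) ≤ ∫ x, f x ∂μ := by
    rw [← hsplit]
    have := add_le_add hIA hIB
    linarith
  simpa [hf, hn] using this
end

section
/- Let ℋ be a vector space, 𝒞 ⊆ ℋ a subspace, and suppose H₀, H₁ are self-adjoint nonnegative operators (with respect to inner products (·,·)₀ and (·,·)₁ respectively) whose quadratic forms Q₀, Q₁ and norms satisfy, for some 0 < ε < 1/2 and all u ∈ 𝒞: (1−ε)‖u‖₀² ≤ ‖u‖₁² ≤ (1+ε)‖u‖₀² and (1−ε)Q₀(u,u) ≤ Q₁(u,u) ≤ (1+ε)Q₀(u,u). Fix α > 1. If moreover (H_i + α)^{−1} maps 𝒞 into 𝒞 and the Cauchy–Schwarz-type bounds Q_i((H_i+α)^{−1}w, (H_i+α)^{−1}w) ≤ ‖w‖_i² and ‖(H_i+α)^{−1}w‖_i ≤ ‖w‖_i hold on 𝒞, then for all u, v ∈ 𝒞 and every integer m ≥ 0: |((H₁+α)^{−m}u,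 v)₁ − ((H₀+α)^{−m}u, v)₀| ≤ (2m+1) ε ‖u‖₀ ‖v‖₀. -/
set_option linter.unusedSectionVars false
set_option maxHeartbeats 1000000

section stmt17aux

variable {E : Type*} [AddCommGroup E] [Module ℂ E]

lemma stmt17_sqrt_cs (x x' w v' : ℝ) (hx : 0 ≤ x) (hx' : 0 ≤ x') (hw : 0 ≤ w) (hv : 0 ≤ v') :
    Real.sqrt x * Real.sqrt w + Real.sqrt x' * Real.sqrt v'
      ≤ Real.sqrt (x + x') * Real.sqrt (w + v') := by
  have h1 : Real.sqrt x * Real.sqrt w + Real.sqrt x' * Real.sqrt v' =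
      Real.sqrt ((Real.sqrt x * Real.sqrt w + Real.sqrt x' * Real.sqrt v')^2) := by
    rw [Real.sqrt_sq (by positivity)]
  have h2 : Real.sqrt (x + x') * Real.sqrt (w + v') = Real.sqrt ((x+x')*(w+v')) := by
    rw [Real.sqrt_mul (by linarith)]
  rw [h1, h2]
  apply Real.sqrt_le_sqrt
  have ex : Real.sqrt x ^ 2 = x := Real.sq_sqrt hx
  have ex' : Real.sqrt x' ^ 2 = x' := Real.sq_sqrt hx'
  have ew : Real.sqrt w ^ 2 = w := Real.sq_sqrt hw
  have ev : Real.sqrt v' ^ 2 = v' := Real.sq_sqrt hv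
  nlinarith [sq_nonneg (Real.sqrt x * Real.sqrt v' - Real.sqrt x' * Real.sqrt w)]

lemma stmt17_key_cs (h q y s t : ℝ) (hh : 0 ≤ h) (hq : 0 ≤ q) (hy : 0 ≤ y) (hs : 0 ≤ s)
    (ht : 0 < t) :
    Real.sqrt h * Real.sqrt y + Real.sqrt (q * s)
      ≤ Real.sqrt (h + t * q) * Real.sqrt (y + s / t) := by
  have e : Real.sqrt (q * s) = Real.sqrt (t * q) * Real.sqrt (s / t) := by
    rw [← Real.sqrt_mul (by positivity)]
    congr 1
    field_simp
  rw [e]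
  exact stmt17_sqrt_cs h (t*q) y (s/t) hh (by positivity) hy (by positivity)

lemma stmt17_addr (ip : E → E → ℂ)
    (hadd : ∀ u v w : E, ip (u + v) w = ip u w + ip v w)
    (hherm : ∀ u v : E, ip v u = (starRingEnd ℂ) (ip u v)) :
    ∀ u v w : E, ip u (v + w) = ip u v + ip u w := by
  intro u v w
  rw [hherm (v + w) u, hadd, map_add, hherm v u, hherm w u]

lemma stmt17_smulr (ip : E → E → ℂ)
    (hsmul : ∀ (a : ℂ) (u v : E), ip (a • u) v = a * ip u v)
    (hherm : ∀ u v : E, ip v u = (starRingEnd ℂ) (ip u v)) :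
    ∀ (a : ℂ) (u v : E), ip u (a • v) = (starRingEnd ℂ) a * ip u v := by
  intro a u v
  rw [hherm (a • v) u, hsmul, map_mul, hherm v u]

lemma stmt17_nid (ip : E → E → ℂ) (H R : E →ₗ[ℂ] E) (α : ℝ)
    (hadd : ∀ u v w : E, ip (u + v) w = ip u w + ip v w)
    (hsmul : ∀ (a : ℂ) (u v : E), ip (a • u) v = a * ip u v)
    (hherm : ∀ u v : E, ip v u = (starRingEnd ℂ) (ip u v))
    (hR : ∀ u : E, H (R u) + (α : ℂ) • R u = u) :
    ∀ w : E, (ip w w).re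
      = (ip (H (R w)) (H (R w))).re + 2*α*(ip (H (R w)) (R w)).re
        + α^2*(ip (R w) (R w)).re := by
  intro w
  have haddr := stmt17_addr ip hadd hherm
  have hsmulr := stmt17_smulr ip hsmul hherm
  set a := H (R w) with ha
  set b := R w with hb
  have hw : a + (α : ℂ) • b = w := hR w
  have e1 : ip w w = ip a a + (α:ℂ) * (ip a b + (starRingEnd ℂ) (ip a b))
      + ((α*α : ℝ) : ℂ) * ip b b := by
    rw [← hw, hadd, haddr, haddr, hsmul, hsmulr, hsmulr, hsmul, hherm b a]
    rw [Complex.conj_ofReal]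
    simp only [Complex.conj_conj]
    push_cast
    ring
  rw [e1]
  simp [Complex.add_re, Complex.add_conj, Complex.re_ofReal_mul, Complex.ofReal_re]
  ring

noncomputable def stmt17V (ip₀ : E → E → ℂ) (H₀ R₁ : E →ₗ[ℂ] E) (α : ℝ) (v : E) : ℕ → ℝ
  | 0 => 0
  | m+1 => stmt17V ip₀ H₀ R₁ α v m
      + ((ip₀ ((R₁^(m+1)) v) ((R₁^(m+1)) v)).re
        + (ip₀ (H₀ ((R₁^(m+1)) v)) ((R₁^(m+1)) v)).re / (2*α))

end stmt17aux

/-- Resolvent comparison lemma for `ε`-close operators.  `ℋ = E` is a complex vector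
space carrying two inner products `ip₀, ip₁` (modelled as hermitian positive maps
`E → E → ℂ`, linear in the first variable), `𝒞` is a subspace, and `H₀, H₁` are linear
operators, self-adjoint and nonnegative with respect to `ip₀`, `ip₁` on `𝒞`, whose norms
and quadratic forms `Qᵢ(u,v) = (Hᵢ u, v)ᵢ` are `ε`-close on `𝒞` (with the bilinear
consequences of `ε`-closeness recorded as hypotheses `hip`, `hQ`).  `Rᵢ = (Hᵢ + α)⁻¹`
maps `𝒞` into `𝒞` and satisfies the Cauchy–Schwarz-type bounds
`Qᵢ(Rᵢw, Rᵢw) ≤ ‖w‖ᵢ²` and `‖Rᵢw‖ᵢ ≤ ‖w‖ᵢ`.  Then for all `u, v ∈ 𝒞` and `m ≥ 0`,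
`|((H₁+α)^{-m}u, v)₁ - ((H₀+α)^{-m}u, v)₀| ≤ (2m+1) ε ‖u‖₀ ‖v‖₀`. -/
theorem stmt17 {E : Type*} [AddCommGroup E] [Module ℂ E]
    (𝒞 : Submodule ℂ E)
    (ip₀ ip₁ : E → E → ℂ)
    (hadd₀ : ∀ u v w : E, ip₀ (u + v) w = ip₀ u w + ip₀ v w)
    (hsmul₀ : ∀ (a : ℂ) (u v : E), ip₀ (a • u) v = a * ip₀ u v)
    (hherm₀ : ∀ u v : E, ip₀ v u = (starRingEnd ℂ) (ip₀ u v))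
    (hpos₀ : ∀ u : E, 0 ≤ (ip₀ u u).re)
    (hadd₁ : ∀ u v w : E, ip₁ (u + v) w = ip₁ u w + ip₁ v w)
    (hsmul₁ : ∀ (a : ℂ) (u v : E), ip₁ (a • u) v = a * ip₁ u v)
    (hherm₁ : ∀ u v : E, ip₁ v u = (starRingEnd ℂ) (ip₁ u v))
    (hpos₁ : ∀ u : E, 0 ≤ (ip₁ u u).re)
    (H₀ H₁ : E →ₗ[ℂ] E)
    (hsa₀ : ∀ u ∈ 𝒞, ∀ v ∈ 𝒞, ip₀ (H₀ u) v = ip₀ u (H₀ v))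
    (hsa₁ : ∀ u ∈ 𝒞, ∀ v ∈ 𝒞, ip₁ (H₁ u) v = ip₁ u (H₁ v))
    (hnn₀ : ∀ u ∈ 𝒞, 0 ≤ (ip₀ (H₀ u) u).re)
    (hnn₁ : ∀ u ∈ 𝒞, 0 ≤ (ip₁ (H₁ u) u).re)
    (ε : ℝ) (hε0 : 0 < ε) (hε : ε < 1 / 2)
    (hnorm_close : ∀ u ∈ 𝒞,
      (1 - ε) * (ip₀ u u).re ≤ (ip₁ u u).re ∧ (ip₁ u u).re ≤ (1 + ε) * (ip₀ u u).re)
    (hform_close : ∀ u ∈ 𝒞,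
      (1 - ε) * (ip₀ (H₀ u) u).re ≤ (ip₁ (H₁ u) u).re ∧
        (ip₁ (H₁ u) u).re ≤ (1 + ε) * (ip₀ (H₀ u) u).re)
    (hip : ∀ u ∈ 𝒞, ∀ v ∈ 𝒞, ‖ip₁ u v - ip₀ u v‖
      ≤ ε * Real.sqrt ((ip₀ u u).re) * Real.sqrt ((ip₀ v v).re))
    (hQ : ∀ u ∈ 𝒞, ∀ v ∈ 𝒞, ‖ip₁ (H₁ u) v - ip₀ (H₀ u) v‖
      ≤ ε * Real.sqrt ((ip₀ (H₀ u) u).re * (ip₀ (H₀ v) v).re))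
    (α : ℝ) (hα : 1 < α)
    (R₀ R₁ : E →ₗ[ℂ] E)
    (hR₀ : ∀ u : E, H₀ (R₀ u) + (α : ℂ) • R₀ u = u)
    (hR₁ : ∀ u : E, H₁ (R₁ u) + (α : ℂ) • R₁ u = u)
    (hR₀' : ∀ u ∈ 𝒞, R₀ (H₀ u + (α : ℂ) • u) = u)
    (hR₁' : ∀ u ∈ 𝒞, R₁ (H₁ u + (α : ℂ) • u) = u)
    (hR₀map : ∀ u ∈ 𝒞, R₀ u ∈ 𝒞)
    (hR₁map : ∀ u ∈ 𝒞, R₁ u ∈ 𝒞)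
    (hCS₀ : ∀ w ∈ 𝒞, (ip₀ (H₀ (R₀ w)) (R₀ w)).re ≤ (ip₀ w w).re ∧
      (ip₀ (R₀ w) (R₀ w)).re ≤ (ip₀ w w).re)
    (hCS₁ : ∀ w ∈ 𝒞, (ip₁ (H₁ (R₁ w)) (R₁ w)).re ≤ (ip₁ w w).re ∧
      (ip₁ (R₁ w) (R₁ w)).re ≤ (ip₁ w w).re) :
    ∀ (m : ℕ), ∀ u ∈ 𝒞, ∀ v ∈ 𝒞,
      ‖ip₁ ((R₁ ^ m) u) v - ip₀ ((R₀ ^ m) u) v‖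
        ≤ (2 * (m : ℝ) + 1) * ε * Real.sqrt ((ip₀ u u).re) * Real.sqrt ((ip₀ v v).re) := by
  have hε1 : (0:ℝ) < 1 - ε := by linarith
  have hα0 : (0:ℝ) < α := by linarith
  have haddr₁ := stmt17_addr ip₁ hadd₁ hherm₁
  have hsmulr₁ := stmt17_smulr ip₁ hsmul₁ hherm₁
  have nid₀ := stmt17_nid ip₀ H₀ R₀ α hadd₀ hsmul₀ hherm₀ hR₀
  have nid₁ := stmt17_nid ip₁ H₁ R₁ α hadd₁ hsmul₁ hherm₁ hR₁
  have pow₀ : ∀ (k : ℕ) (w : E), (R₀^(k+1)) w = (R₀^k) (R₀ w) := by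
    intro k w; rw [pow_succ, Module.End.mul_apply]
  have pow₁ : ∀ (k : ℕ) (w : E), (R₁^(k+1)) w = (R₁^k) (R₁ w) := by
    intro k w; rw [pow_succ, Module.End.mul_apply]
  have pow₁' : ∀ (k : ℕ) (w : E), (R₁^(k+1)) w = R₁ ((R₁^k) w) := by
    intro k w; rw [pow_succ', Module.End.mul_apply]
  have mem₀ : ∀ (k : ℕ), ∀ w ∈ 𝒞, (R₀^k) w ∈ 𝒞 := by
    intro k
    induction k with
    | zero => intro w hw; simpa using hw
    | succ k ih => intro w hw; rw [pow₀]; exact ih _ (hR₀map w hw)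
  have mem₁ : ∀ (k : ℕ), ∀ w ∈ 𝒞, (R₁^k) w ∈ 𝒞 := by
    intro k
    induction k with
    | zero => intro w hw; simpa using hw
    | succ k ih => intro w hw; rw [pow₁]; exact ih _ (hR₁map w hw)
  have N0mono : ∀ (k : ℕ), ∀ w ∈ 𝒞,
      (ip₀ ((R₀^k) w) ((R₀^k) w)).re ≤ (ip₀ w w).re := by
    intro k
    induction k with
    | zero => intro w hw; simp
    | succ k ih =>
      intro w hw
      rw [pow₀]
      exact le_trans (ih _ (hR₀map w hw)) (hCS₀ w hw).2
  have N1mono : ∀ (k : ℕ), ∀ w ∈ 𝒞,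
      (ip₁ ((R₁^k) w) ((R₁^k) w)).re ≤ (ip₁ w w).re := by
    intro k
    induction k with
    | zero => intro w hw; simp
    | succ k ih =>
      intro w hw
      rw [pow₁]
      exact le_trans (ih _ (hR₁map w hw)) (hCS₁ w hw).2
  have hR1sa : ∀ a ∈ 𝒞, ∀ b ∈ 𝒞, ip₁ (R₁ a) b = ip₁ a (R₁ b) := by
    intro a ha b hb
    have h1 : ip₁ (R₁ a) b = ip₁ (R₁ a) (H₁ (R₁ b)) + (α:ℂ) * ip₁ (R₁ a) (R₁ b) := by
      conv_lhs => rw [← hR₁ b]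
      rw [haddr₁, hsmulr₁, Complex.conj_ofReal]
    have h2 : ip₁ (R₁ a) (H₁ (R₁ b)) = ip₁ (H₁ (R₁ a)) (R₁ b) :=
      (hsa₁ _ (hR₁map a ha) _ (hR₁map b hb)).symm
    have h3 : ip₁ a (R₁ b) = ip₁ (H₁ (R₁ a)) (R₁ b) + (α:ℂ) * ip₁ (R₁ a) (R₁ b) := by
      conv_lhs => rw [← hR₁ a]
      rw [hadd₁, hsmul₁]
    rw [h1, h2, h3]
  have hR1powsa : ∀ (k : ℕ), ∀ a ∈ 𝒞, ∀ b ∈ 𝒞,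
      ip₁ ((R₁^k) a) b = ip₁ a ((R₁^k) b) := by
    intro k
    induction k with
    | zero => intro a ha b hb; simp
    | succ k ih =>
      intro a ha b hb
      calc ip₁ ((R₁^(k+1)) a) b = ip₁ ((R₁^k) (R₁ a)) b := by rw [pow₁]
        _ = ip₁ (R₁ a) ((R₁^k) b) := ih (R₁ a) (hR₁map a ha) b hb
        _ = ip₁ a (R₁ ((R₁^k) b)) := hR1sa a ha _ (mem₁ k b hb)
        _ = ip₁ a ((R₁^(k+1)) b) := by rw [← pow₁']
  have q1step : ∀ (k : ℕ), ∀ w ∈ 𝒞,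
      2*α*(ip₁ (H₁ ((R₁^(k+1)) w)) ((R₁^(k+1)) w)).re
        + (ip₁ ((R₁^(k+1)) w) ((R₁^(k+1)) w)).re
        ≤ (ip₁ ((R₁^k) w) ((R₁^k) w)).re := by
    intro k w hw
    have h := nid₁ ((R₁^k) w)
    rw [← pow₁' k w] at h
    have hH : 0 ≤ (ip₁ (H₁ ((R₁^(k+1)) w)) (H₁ ((R₁^(k+1)) w))).re := hpos₁ _
    have hN : 0 ≤ (ip₁ ((R₁^(k+1)) w) ((R₁^(k+1)) w)).re := hpos₁ _
    have hα2 : (1:ℝ) ≤ α^2 := by nlinarith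
    nlinarith [mul_nonneg (sub_nonneg.mpr hα2) hN, hH]
  have Vnonneg : ∀ (k : ℕ), ∀ w ∈ 𝒞, 0 ≤ stmt17V ip₀ H₀ R₁ α w k := by
    intro k
    induction k with
    | zero => intro w hw; simp [stmt17V]
    | succ k ih =>
      intro w hw
      have h1 := hpos₀ ((R₁^(k+1)) w)
      have h2 := hnn₀ _ (mem₁ (k+1) w hw)
      have h3 := ih w hw
      have h4 : 0 ≤ (ip₀ (H₀ ((R₁^(k+1)) w)) ((R₁^(k+1)) w)).re / (2*α) := by positivity
      simp only [stmt17V]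
      linarith
  have Vbound : ∀ (k : ℕ), ∀ w ∈ 𝒞,
      stmt17V ip₀ H₀ R₁ α w k ≤ 3*(k:ℝ)*(ip₀ w w).re
        + ((ip₁ w w).re - (ip₁ ((R₁^k) w) ((R₁^k) w)).re) / (4*α^2*(1-ε)) := by
    intro k
    induction k with
    | zero => intro w hw; simp [stmt17V]
    | succ k ih =>
      intro w hw
      have ihw := ih w hw
      have ymem := mem₁ (k+1) w hw
      have hN0y : (1-ε) * (ip₀ ((R₁^(k+1)) w) ((R₁^(k+1)) w)).re
          ≤ (ip₁ ((R₁^(k+1)) w) ((R₁^(k+1)) w)).re := (hnorm_close _ ymem).1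
      have hN1y : (ip₁ ((R₁^(k+1)) w) ((R₁^(k+1)) w)).re ≤ (ip₁ w w).re := N1mono (k+1) w hw
      have hN1w : (ip₁ w w).re ≤ (1+ε)*(ip₀ w w).re := (hnorm_close w hw).2
      have hN0w : 0 ≤ (ip₀ w w).re := hpos₀ w
      have hy3 : (ip₀ ((R₁^(k+1)) w) ((R₁^(k+1)) w)).re ≤ 3 * (ip₀ w w).re := by
        nlinarith [hpos₀ ((R₁^(k+1)) w)]
      have hq : (1-ε)*(ip₀ (H₀ ((R₁^(k+1)) w)) ((R₁^(k+1)) w)).re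
          ≤ (ip₁ (H₁ ((R₁^(k+1)) w)) ((R₁^(k+1)) w)).re := (hform_close _ ymem).1
      have hstep := q1step k w hw
      have h2α : (0:ℝ) < 2*α := by linarith
      have h4p : (0:ℝ) < 4*α^2*(1-ε) := by positivity
      have hq' : (ip₀ (H₀ ((R₁^(k+1)) w)) ((R₁^(k+1)) w)).re / (2*α)
          ≤ ((ip₁ ((R₁^k) w) ((R₁^k) w)).re
              - (ip₁ ((R₁^(k+1)) w) ((R₁^(k+1)) w)).re) / (4*α^2*(1-ε)) := by
        rw [div_le_div_iff₀ h2α h4p]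
        nlinarith [hnn₀ _ ymem, hnn₁ _ ymem]
      have hsplit : ((ip₁ w w).re - (ip₁ ((R₁^(k+1)) w) ((R₁^(k+1)) w)).re)/(4*α^2*(1-ε))
          = ((ip₁ w w).re - (ip₁ ((R₁^k) w) ((R₁^k) w)).re)/(4*α^2*(1-ε))
            + ((ip₁ ((R₁^k) w) ((R₁^k) w)).re
                - (ip₁ ((R₁^(k+1)) w) ((R₁^(k+1)) w)).re)/(4*α^2*(1-ε)) := by
        ring
      simp only [stmt17V]
      push_cast
      linarith
  -- main induction
  have main : ∀ (k : ℕ), ∀ u ∈ 𝒞, ∀ v ∈ 𝒞,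
      ‖ip₁ ((R₁^k) u) v - ip₀ ((R₀^k) u) v‖
        ≤ ε * (Real.sqrt ((ip₀ ((R₀^k) u) ((R₀^k) u)).re) * Real.sqrt ((ip₀ v v).re)
            + Real.sqrt ((ip₀ u u).re - (ip₀ ((R₀^k) u) ((R₀^k) u)).re)
              * Real.sqrt (stmt17V ip₀ H₀ R₁ α v k)) := by
    intro k
    induction k with
    | zero =>
      intro u hu v hv
      simp only [pow_zero, Module.End.one_apply, stmt17V, sub_self, Real.sqrt_zero,
        mul_zero, add_zero]
      calc ‖ip₁ u v - ip₀ u v‖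
          ≤ ε * Real.sqrt ((ip₀ u u).re) * Real.sqrt ((ip₀ v v).re) := hip u hu v hv
        _ = ε * (Real.sqrt ((ip₀ u u).re) * Real.sqrt ((ip₀ v v).re)) := by ring
    | succ k ih =>
      intro u hu v hv
      have hu' : R₀ u ∈ 𝒞 := hR₀map u hu
      have hz : (R₁^k) v ∈ 𝒞 := mem₁ k v hv
      have hy : (R₁^(k+1)) v ∈ 𝒞 := mem₁ (k+1) v hv
      have hamem : H₀ (R₀ u) ∈ 𝒞 := by
        have h : H₀ (R₀ u) = u - (α:ℂ) • R₀ u := eq_sub_of_add_eq (hR₀ u)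
        rw [h]
        exact Submodule.sub_mem 𝒞 hu (Submodule.smul_mem 𝒞 _ hu')
      -- algebraic decomposition
      have e1 : ip₁ ((R₁^(k+1)) u) v = ip₁ u ((R₁^(k+1)) v) := hR1powsa (k+1) u hu v hv
      have e2 : ip₁ u ((R₁^(k+1)) v)
          = ip₁ (H₀ (R₀ u)) ((R₁^(k+1)) v) + (α:ℂ) * ip₁ (R₀ u) ((R₁^(k+1)) v) := by
        conv_lhs => rw [← hR₀ u]
        rw [hadd₁, hsmul₁]
      have e3 : ip₁ ((R₁^k) (R₀ u)) v = ip₁ (R₀ u) ((R₁^k) v) := hR1powsa k (R₀ u) hu' v hv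
      have hz' : H₁ ((R₁^(k+1)) v) + (α:ℂ) • ((R₁^(k+1)) v) = (R₁^k) v := by
        have h := hR₁ ((R₁^k) v)
        rw [← pow₁' k v] at h
        exact h
      have e4 : ip₁ (R₀ u) ((R₁^k) v)
          = ip₁ (H₁ (R₀ u)) ((R₁^(k+1)) v) + (α:ℂ) * ip₁ (R₀ u) ((R₁^(k+1)) v) := by
        conv_lhs => rw [← hz']
        rw [haddr₁, hsmulr₁, Complex.conj_ofReal, ← hsa₁ (R₀ u) hu' ((R₁^(k+1)) v) hy]
      have key : ip₁ ((R₁^(k+1)) u) v - ip₀ ((R₀^(k+1)) u) v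
          = (ip₁ (H₀ (R₀ u)) ((R₁^(k+1)) v) - ip₀ (H₀ (R₀ u)) ((R₁^(k+1)) v))
            - (ip₁ (H₁ (R₀ u)) ((R₁^(k+1)) v) - ip₀ (H₀ (R₀ u)) ((R₁^(k+1)) v))
            + (ip₁ ((R₁^k) (R₀ u)) v - ip₀ ((R₀^k) (R₀ u)) v) := by
        rw [e1, e2, pow₀ k u, e3, e4]
        ring
      -- bounds on the three pieces
      have t1 := hip _ hamem _ hy
      have t2 := hQ (R₀ u) hu' _ hy
      have t3 := ih (R₀ u) hu' v hv
      -- triangle inequality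
      have tri : ‖ip₁ ((R₁^(k+1)) u) v - ip₀ ((R₀^(k+1)) u) v‖
          ≤ ‖ip₁ (H₀ (R₀ u)) ((R₁^(k+1)) v) - ip₀ (H₀ (R₀ u)) ((R₁^(k+1)) v)‖
            + ‖ip₁ (H₁ (R₀ u)) ((R₁^(k+1)) v) - ip₀ (H₀ (R₀ u)) ((R₁^(k+1)) v)‖
            + ‖ip₁ ((R₁^k) (R₀ u)) v - ip₀ ((R₀^k) (R₀ u)) v‖ := by
        rw [key]
        calc ‖_ - _ + (ip₁ ((R₁^k) (R₀ u)) v - ip₀ ((R₀^k) (R₀ u)) v)‖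
            ≤ ‖ip₁ (H₀ (R₀ u)) ((R₁^(k+1)) v) - ip₀ (H₀ (R₀ u)) ((R₁^(k+1)) v)
                - (ip₁ (H₁ (R₀ u)) ((R₁^(k+1)) v) - ip₀ (H₀ (R₀ u)) ((R₁^(k+1)) v))‖
              + ‖ip₁ ((R₁^k) (R₀ u)) v - ip₀ ((R₀^k) (R₀ u)) v‖ := norm_add_le _ _
          _ ≤ _ := by
              have := norm_sub_le
                (ip₁ (H₀ (R₀ u)) ((R₁^(k+1)) v) - ip₀ (H₀ (R₀ u)) ((R₁^(k+1)) v))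
                (ip₁ (H₁ (R₀ u)) ((R₁^(k+1)) v) - ip₀ (H₀ (R₀ u)) ((R₁^(k+1)) v))
              linarith
      -- numeric work
      have hHn : 0 ≤ (ip₀ (H₀ (R₀ u)) (H₀ (R₀ u))).re := hpos₀ _
      have hQn : 0 ≤ (ip₀ (H₀ (R₀ u)) (R₀ u)).re := hnn₀ _ hu'
      have hY : 0 ≤ (ip₀ ((R₁^(k+1)) v) ((R₁^(k+1)) v)).re := hpos₀ _
      have hS : 0 ≤ (ip₀ (H₀ ((R₁^(k+1)) v)) ((R₁^(k+1)) v)).re := hnn₀ _ hy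
      have hcsk := stmt17_key_cs
        ((ip₀ (H₀ (R₀ u)) (H₀ (R₀ u))).re) ((ip₀ (H₀ (R₀ u)) (R₀ u)).re)
        ((ip₀ ((R₁^(k+1)) v) ((R₁^(k+1)) v)).re)
        ((ip₀ (H₀ ((R₁^(k+1)) v)) ((R₁^(k+1)) v)).re) (2*α)
        hHn hQn hY hS (by linarith)
      have hbudget : (ip₀ (H₀ (R₀ u)) (H₀ (R₀ u))).re
          + 2*α*(ip₀ (H₀ (R₀ u)) (R₀ u)).re
          ≤ (ip₀ u u).re - (ip₀ (R₀ u) (R₀ u)).re := by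
        have h := nid₀ u
        have hα2 : (1:ℝ) ≤ α^2 := by nlinarith
        nlinarith [mul_nonneg (sub_nonneg.mpr hα2) (hpos₀ (R₀ u))]
      have hW : 0 ≤ (ip₀ ((R₁^(k+1)) v) ((R₁^(k+1)) v)).re
          + (ip₀ (H₀ ((R₁^(k+1)) v)) ((R₁^(k+1)) v)).re / (2*α) := by positivity
      have c1 : Real.sqrt ((ip₀ (H₀ (R₀ u)) (H₀ (R₀ u))).re)
            * Real.sqrt ((ip₀ ((R₁^(k+1)) v) ((R₁^(k+1)) v)).re)
          + Real.sqrt ((ip₀ (H₀ (R₀ u)) (R₀ u)).re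
              * (ip₀ (H₀ ((R₁^(k+1)) v)) ((R₁^(k+1)) v)).re)
          ≤ Real.sqrt ((ip₀ u u).re - (ip₀ (R₀ u) (R₀ u)).re)
            * Real.sqrt ((ip₀ ((R₁^(k+1)) v) ((R₁^(k+1)) v)).re
                + (ip₀ (H₀ ((R₁^(k+1)) v)) ((R₁^(k+1)) v)).re / (2*α)) := by
        refine le_trans hcsk ?_
        exact mul_le_mul_of_nonneg_right (Real.sqrt_le_sqrt hbudget) (Real.sqrt_nonneg _)
      have hX : 0 ≤ (ip₀ u u).re - (ip₀ (R₀ u) (R₀ u)).re := by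
        have := (hCS₀ u hu).2; linarith
      have hX' : 0 ≤ (ip₀ (R₀ u) (R₀ u)).re - (ip₀ ((R₀^k) (R₀ u)) ((R₀^k) (R₀ u))).re := by
        have := N0mono k (R₀ u) hu'; linarith
      have hVk : 0 ≤ stmt17V ip₀ H₀ R₁ α v k := Vnonneg k v hv
      have c2 : Real.sqrt ((ip₀ u u).re - (ip₀ (R₀ u) (R₀ u)).re)
            * Real.sqrt ((ip₀ ((R₁^(k+1)) v) ((R₁^(k+1)) v)).re
                + (ip₀ (H₀ ((R₁^(k+1)) v)) ((R₁^(k+1)) v)).re / (2*α))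
          + Real.sqrt ((ip₀ (R₀ u) (R₀ u)).re
              - (ip₀ ((R₀^k) (R₀ u)) ((R₀^k) (R₀ u))).re)
            * Real.sqrt (stmt17V ip₀ H₀ R₁ α v k)
          ≤ Real.sqrt ((ip₀ u u).re - (ip₀ ((R₀^k) (R₀ u)) ((R₀^k) (R₀ u))).re)
            * Real.sqrt (stmt17V ip₀ H₀ R₁ α v k
                + ((ip₀ ((R₁^(k+1)) v) ((R₁^(k+1)) v)).re
                  + (ip₀ (H₀ ((R₁^(k+1)) v)) ((R₁^(k+1)) v)).re / (2*α))) := by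
        have h := stmt17_sqrt_cs
          ((ip₀ u u).re - (ip₀ (R₀ u) (R₀ u)).re)
          ((ip₀ (R₀ u) (R₀ u)).re - (ip₀ ((R₀^k) (R₀ u)) ((R₀^k) (R₀ u))).re)
          ((ip₀ ((R₁^(k+1)) v) ((R₁^(k+1)) v)).re
            + (ip₀ (H₀ ((R₁^(k+1)) v)) ((R₁^(k+1)) v)).re / (2*α))
          (stmt17V ip₀ H₀ R₁ α v k) hX hX' hW hVk
        have e5 : (ip₀ u u).re - (ip₀ (R₀ u) (R₀ u)).re
            + ((ip₀ (R₀ u) (R₀ u)).re - (ip₀ ((R₀^k) (R₀ u)) ((R₀^k) (R₀ u))).re)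
            = (ip₀ u u).re - (ip₀ ((R₀^k) (R₀ u)) ((R₀^k) (R₀ u))).re := by ring
        have e6 : (ip₀ ((R₁^(k+1)) v) ((R₁^(k+1)) v)).re
            + (ip₀ (H₀ ((R₁^(k+1)) v)) ((R₁^(k+1)) v)).re / (2*α)
            + stmt17V ip₀ H₀ R₁ α v k
            = stmt17V ip₀ H₀ R₁ α v k
              + ((ip₀ ((R₁^(k+1)) v) ((R₁^(k+1)) v)).re
                + (ip₀ (H₀ ((R₁^(k+1)) v)) ((R₁^(k+1)) v)).re / (2*α)) := by ring
        rw [e5, e6] at h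
        exact h
      -- put everything together
      rw [pow₀ k u]
      simp only [stmt17V]
      have c1' := mul_le_mul_of_nonneg_left c1 (le_of_lt hε0)
      have c2' := mul_le_mul_of_nonneg_left c2 (le_of_lt hε0)
      calc ‖ip₁ ((R₁^(k+1)) u) v - ip₀ ((R₀^k) (R₀ u)) v‖
          = ‖ip₁ ((R₁^(k+1)) u) v - ip₀ ((R₀^(k+1)) u) v‖ := by rw [pow₀ k u]
        _ ≤ _ := tri
        _ ≤ ε * (Real.sqrt ((ip₀ (H₀ (R₀ u)) (H₀ (R₀ u))).re)
                * Real.sqrt ((ip₀ ((R₁^(k+1)) v) ((R₁^(k+1)) v)).re)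
              + Real.sqrt ((ip₀ (H₀ (R₀ u)) (R₀ u)).re
                  * (ip₀ (H₀ ((R₁^(k+1)) v)) ((R₁^(k+1)) v)).re))
            + ε * (Real.sqrt ((ip₀ ((R₀^k) (R₀ u)) ((R₀^k) (R₀ u))).re)
                * Real.sqrt ((ip₀ v v).re)
              + Real.sqrt ((ip₀ (R₀ u) (R₀ u)).re
                  - (ip₀ ((R₀^k) (R₀ u)) ((R₀^k) (R₀ u))).re)
                * Real.sqrt (stmt17V ip₀ H₀ R₁ α v k)) := by
            nlinarith [t1, t2, t3]
        _ ≤ _ := by nlinarith [c1', c2']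
  -- conclude
  intro m u hu v hv
  obtain _ | m := m
  · have h := main 0 u hu v hv
    simp only [pow_zero, Module.End.one_apply, stmt17V, sub_self, Real.sqrt_zero,
      mul_zero, add_zero] at h
    calc ‖ip₁ u v - ip₀ u v‖
        ≤ ε * (Real.sqrt ((ip₀ u u).re) * Real.sqrt ((ip₀ v v).re)) := h
      _ ≤ (2 * ((0:ℕ) : ℝ) + 1) * ε * Real.sqrt ((ip₀ u u).re) * Real.sqrt ((ip₀ v v).re) := by
          push_cast; ring_nf; linarith [le_refl (ε * (Real.sqrt ((ip₀ u u).re) * Real.sqrt ((ip₀ v v).re)))]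
  · have h := main (m+1) u hu v hv
    have hb := Vbound (m+1) v hv
    have hN1v : (ip₁ v v).re ≤ (1+ε)*(ip₀ v v).re := (hnorm_close v hv).2
    have hN1R : 0 ≤ (ip₁ ((R₁^(m+1)) v) ((R₁^(m+1)) v)).re := hpos₁ _
    have hN0v : 0 ≤ (ip₀ v v).re := hpos₀ v
    have hα2 : (1:ℝ) ≤ α^2 := by nlinarith
    have hdiv : ((ip₁ v v).re - (ip₁ ((R₁^(m+1)) v) ((R₁^(m+1)) v)).re) / (4*α^2*(1-ε))
        ≤ (3/4) * (ip₀ v v).re := by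
      rw [div_le_iff₀ (by positivity)]
      have hp1 : (0:ℝ) ≤ (α^2 - 1)*(1-ε)*(ip₀ v v).re :=
        mul_nonneg (mul_nonneg (sub_nonneg.mpr hα2) (le_of_lt hε1)) hN0v
      have hp2 : (0:ℝ) ≤ (2-4*ε)*(ip₀ v v).re :=
        mul_nonneg (by linarith) hN0v
      nlinarith [hp1, hp2, hN1v, hN1R]
    have hV : stmt17V ip₀ H₀ R₁ α v (m+1) ≤ (3*((m:ℝ)+1) + 3/4) * (ip₀ v v).re := by
      have := hb
      push_cast at this ⊢
      nlinarith
    have hsV : Real.sqrt (stmt17V ip₀ H₀ R₁ α v (m+1))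
        ≤ Real.sqrt (3*((m:ℝ)+1) + 3/4) * Real.sqrt ((ip₀ v v).re) := by
      rw [← Real.sqrt_mul (by positivity)]
      exact Real.sqrt_le_sqrt hV
    have hm1 : (1:ℝ) ≤ ((m:ℝ)+1) := by
      have : (0:ℝ) ≤ (m:ℝ) := Nat.cast_nonneg m
      linarith
    have hsm : Real.sqrt (3*((m:ℝ)+1) + 3/4) ≤ 2*((m:ℝ)+1) := by
      have h1 : 3*((m:ℝ)+1) + 3/4 ≤ (2*((m:ℝ)+1))^2 := by nlinarith
      calc Real.sqrt (3*((m:ℝ)+1) + 3/4) ≤ Real.sqrt ((2*((m:ℝ)+1))^2) := Real.sqrt_le_sqrt h1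
        _ = 2*((m:ℝ)+1) := Real.sqrt_sq (by linarith)
    have hs1 : Real.sqrt ((ip₀ ((R₀^(m+1)) u) ((R₀^(m+1)) u)).re)
        ≤ Real.sqrt ((ip₀ u u).re) := Real.sqrt_le_sqrt (N0mono (m+1) u hu)
    have hs2 : Real.sqrt ((ip₀ u u).re - (ip₀ ((R₀^(m+1)) u) ((R₀^(m+1)) u)).re)
        ≤ Real.sqrt ((ip₀ u u).re) := by
      apply Real.sqrt_le_sqrt
      have := hpos₀ ((R₀^(m+1)) u); linarith
    calc ‖ip₁ ((R₁^(m+1)) u) v - ip₀ ((R₀^(m+1)) u) v‖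
        ≤ ε * (Real.sqrt ((ip₀ ((R₀^(m+1)) u) ((R₀^(m+1)) u)).re) * Real.sqrt ((ip₀ v v).re)
            + Real.sqrt ((ip₀ u u).re - (ip₀ ((R₀^(m+1)) u) ((R₀^(m+1)) u)).re)
              * Real.sqrt (stmt17V ip₀ H₀ R₁ α v (m+1))) := h
      _ ≤ ε * (Real.sqrt ((ip₀ u u).re) * Real.sqrt ((ip₀ v v).re)
            + Real.sqrt ((ip₀ u u).re)
              * (Real.sqrt (3*((m:ℝ)+1) + 3/4) * Real.sqrt ((ip₀ v v).re))) := by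
          apply mul_le_mul_of_nonneg_left _ (le_of_lt hε0)
          apply add_le_add
          · exact mul_le_mul_of_nonneg_right hs1 (Real.sqrt_nonneg _)
          · calc Real.sqrt ((ip₀ u u).re - (ip₀ ((R₀^(m+1)) u) ((R₀^(m+1)) u)).re)
                  * Real.sqrt (stmt17V ip₀ H₀ R₁ α v (m+1))
                ≤ Real.sqrt ((ip₀ u u).re) * Real.sqrt (stmt17V ip₀ H₀ R₁ α v (m+1)) :=
                  mul_le_mul_of_nonneg_right hs2 (Real.sqrt_nonneg _)
              _ ≤ _ := mul_le_mul_of_nonneg_left hsV (Real.sqrt_nonneg _)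
      _ ≤ (2 * ((m+1 : ℕ) : ℝ) + 1) * ε * Real.sqrt ((ip₀ u u).re)
            * Real.sqrt ((ip₀ v v).re) := by
          push_cast
          have h3 : ε * (Real.sqrt ((ip₀ u u).re)
              * (Real.sqrt (3*((m:ℝ)+1) + 3/4) * Real.sqrt ((ip₀ v v).re)))
              ≤ ε * (Real.sqrt ((ip₀ u u).re) * (2*((m:ℝ)+1) * Real.sqrt ((ip₀ v v).re))) := by
            apply mul_le_mul_of_nonneg_left _ (le_of_lt hε0)
            apply mul_le_mul_of_nonneg_left _ (Real.sqrt_nonneg _)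
            exact mul_le_mul_of_nonneg_right hsm (Real.sqrt_nonneg _)
          nlinarith [h3]
end
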